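/- arXiv:1009.3248 — 2 statements merged into one kernel-verified Lean document; each statement's English description precedes it below -/
import Mathlib

section
/- If ν is a probability measure on (M, 𝓕) which is φ-invariant (ν ∘ φ^{−1} = ν) and absolutely continuous with respect to ω, and if the entropy production observable σ belongs to L¹(M, dν), then ∫_M σ dν = 0. -/
open MeasureTheory Filter
open scoped ENNReal

/-- Clamp is 1-Lipschitz. -/
lemma clamp_abs_sub_le (a b : ℝ) (c : ℝ) :
    |max (min a c) (-c) - max (min b c) (-c)| ≤ |a - b| := by
  refine le_trans (abs_max_sub_max_le_abs _ _ _) ?_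
  have := abs_min_sub_min_le_max a c b c
  simpa using this.trans (by simp [abs_nonneg])

/-- For an invariant probability measure, an integrable coboundary has zero integral. -/
lemma integral_coboundary_zero {M : Type*} [MeasurableSpace M]
    (ν : Measure M) [IsProbabilityMeasure ν] (S : M → M) (hS : Measurable S)
    (hinv : ν.map S = ν) (a : M → ℝ) (ha : Measurable a)
    (u : M → ℝ) (hu : Integrable u ν) (huae : ∀ᵐ x ∂ν, u x = a (S x) - a x) :
    ∫ x, u x ∂ν = 0 := by
  set A : ℕ → M → ℝ := fun n x => max (min (a x) n) (-(n : ℝ)) with hA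
  have hAmeas : ∀ n, Measurable (A n) := fun n => (ha.min measurable_const).max measurable_const
  have hAbdd : ∀ n x, |A n x| ≤ n := by
    intro n x
    rw [abs_le]
    constructor
    · exact le_max_right _ _
    · exact max_le (min_le_right _ _) (by simp)
  have hAint : ∀ n, Integrable (A n) ν := by
    intro n
    refine Integrable.mono' (integrable_const (n : ℝ)) (hAmeas n).aestronglyMeasurable ?_
    exact Filter.Eventually.of_forall fun x => by simpa using hAbdd n x
  have hASint : ∀ n, Integrable (fun x => A n (S x)) ν := by
    intro n
    refine Integrable.mono' (integrable_const (n : ℝ))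
      ((hAmeas n).comp hS).aestronglyMeasurable ?_
    exact Filter.Eventually.of_forall fun x => by simpa using hAbdd n (S x)
  -- each truncated coboundary integrates to zero
  have hzero : ∀ n, ∫ x, (A n (S x) - A n x) ∂ν = 0 := by
    intro n
    rw [integral_sub (hASint n) (hAint n)]
    have : ∫ x, A n (S x) ∂ν = ∫ x, A n x ∂ν := by
      have := integral_map (μ := ν) hS.aemeasurable (hAmeas n).aestronglyMeasurable
      rw [hinv] at this
      exact this.symm
    rw [this, sub_self]
  -- dominated convergence
  have hconv : Tendsto (fun n => ∫ x, (A n (S x) - A n x) ∂ν) atTop (nhds (∫ x, u x ∂ν)) := by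
    refine tendsto_integral_of_dominated_convergence (fun x => |a (S x) - a x|)
      (fun n => ((hAmeas n).comp hS).sub (hAmeas n) |>.aestronglyMeasurable) ?_ ?_ ?_
    · exact (hu.abs).congr (huae.mono fun x hx => by simp only [hx])
    · intro n
      refine Filter.Eventually.of_forall fun x => ?_
      simpa [Real.norm_eq_abs] using clamp_abs_sub_le (a (S x)) (a x) n
    · refine huae.mono fun x hx => ?_
      rw [hx]
      have key : ∀ y : M, Tendsto (fun n : ℕ => A n y) atTop (nhds (a y)) := by
        intro y
        refine tendsto_nhds_of_eventually_eq ?_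
        filter_upwards [eventually_ge_atTop (⌈|a y|⌉₊)] with n hn
        have h1 : |a y| ≤ (n : ℝ) := le_trans (Nat.le_ceil _) (by exact_mod_cast hn)
        rw [abs_le] at h1
        simp [hA, min_eq_left h1.2, max_eq_left h1.1]
      exact ((key (S x)).sub (key x))
  have := hconv.congr' (Filter.Eventually.of_forall fun n => (hzero n))
  exact (tendsto_nhds_unique tendsto_const_nhds this).symm

/-- The entropy production observable `σ := (log Δ^1) ∘ φ` where
`Δ^1 := d(ω∘φ^{-1})/dω` and `T n` is `φ^n`. -/
noncomputable def entProd {M : Type*} [MeasurableSpace M] (ω : Measure M) (T : ℤ → M → M)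
    (x : M) : ℝ :=
  Real.log (((ω.map (T 1)).rnDeriv ω (T 1 x)).toReal)

/-- If `ν` is a `φ`-invariant probability measure, absolutely continuous w.r.t. `ω`, and the
entropy production observable `σ` is `ν`-integrable, then `ν(σ) = 0`. -/
theorem invariant_normal_state_entropy_production_zero
    {M : Type*} [MeasurableSpace M] (ω : Measure M) [IsProbabilityMeasure ω]
    (T : ℤ → M → M)
    (hT0 : T 0 = id)
    (hTadd : ∀ n m : ℤ, T (n + m) = T n ∘ T m)
    (hTmeas : ∀ n : ℤ, Measurable (T n))
    (hequiv : ∀ n : ℤ, ω.map (T n) ≪ ω ∧ ω ≪ ω.map (T n))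
    (ν : Measure M) [IsProbabilityMeasure ν]
    (hinv : ν.map (T 1) = ν)
    (hac : ν ≪ ω)
    (hint : Integrable (fun x => entProd ω T x) ν) :
    ∫ x, entProd ω T x ∂ν = 0 := by
  -- `T 1` is a measurable equivalence
  have hli : ∀ x, T (-1) (T 1 x) = x := by
    intro x
    have h := hTadd (-1) 1
    have : T (-1 + 1) x = T (-1) (T 1 x) := by rw [h]; rfl
    simpa [hT0] using this.symm
  have hri : ∀ x, T 1 (T (-1) x) = x := by
    intro x
    have h := hTadd 1 (-1)
    have : T (1 + -1) x = T 1 (T (-1) x) := by rw [h]; rfl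
    simpa [hT0] using this.symm
  set e : M ≃ᵐ M :=
    { toFun := T 1, invFun := T (-1), left_inv := hli, right_inv := hri,
      measurable_toFun := hTmeas 1, measurable_invFun := hTmeas (-1) }
  have hemb : MeasurableEmbedding (T 1) := e.measurableEmbedding
  have hmapω : IsProbabilityMeasure (ω.map (T 1)) :=
    Measure.isProbabilityMeasure_map (hTmeas 1).aemeasurable
  set g : M → ℝ≥0∞ := ν.rnDeriv ω with hg
  have hgmeas : Measurable g := Measure.measurable_rnDeriv ν ω
  have hacmap : ν ≪ ω.map (T 1) := hac.trans (hequiv 1).2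
  -- chain rule : ν.rnDeriv (ω.map T1) * (ω.map T1).rnDeriv ω =ᵐ[ω] g
  have hchain : ν.rnDeriv (ω.map (T 1)) * (ω.map (T 1)).rnDeriv ω =ᵐ[ω] g :=
    Measure.rnDeriv_mul_rnDeriv hacmap
  -- transfer the chain rule along T 1 : holds ω-a.e. at (T 1 x)
  have hchain' : ∀ᵐ x ∂ω,
      ν.rnDeriv (ω.map (T 1)) (T 1 x) * (ω.map (T 1)).rnDeriv ω (T 1 x) = g (T 1 x) := by
    have h1 : ∀ᵐ y ∂(ω.map (T 1)),
        ν.rnDeriv (ω.map (T 1)) y * (ω.map (T 1)).rnDeriv ω y = g y :=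
      (hequiv 1).1.ae_le hchain
    rw [hemb.ae_map_iff] at h1
    exact h1
  -- the map identity : ν.rnDeriv (ω.map T1) (T 1 x) =ᵐ[ω] g x
  have hmapid : (fun x => ν.rnDeriv (ω.map (T 1)) (T 1 x)) =ᵐ[ω] g := by
    have := hemb.rnDeriv_map ν ω
    rw [hinv] at this
    exact this
  -- combine : ω-a.e. (hence ν-a.e.) g x * Δ (T 1 x) = g (T 1 x)
  have hkey : ∀ᵐ x ∂ν, g x * (ω.map (T 1)).rnDeriv ω (T 1 x) = g (T 1 x) := by
    refine hac.ae_le ?_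
    filter_upwards [hchain', hmapid] with x h1 h2
    rw [← h2]; exact h1
  -- positivity and finiteness facts
  have hgpos : ∀ᵐ x ∂ν, 0 < g x := Measure.rnDeriv_pos hac
  have hgfin : ∀ᵐ x ∂ν, g x ≠ ∞ := hac.ae_le (Measure.rnDeriv_ne_top ν ω)
  have htransfer : ∀ {p : M → Prop}, (∀ᵐ x ∂ν, p x) → (∀ᵐ x ∂ν, p (T 1 x)) := by
    intro p hp
    have : ∀ᵐ y ∂(ν.map (T 1)), p y := by rw [hinv]; exact hp
    rw [hemb.ae_map_iff] at this
    exact this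
  have hgTpos : ∀ᵐ x ∂ν, 0 < g (T 1 x) := htransfer hgpos
  have hgTfin : ∀ᵐ x ∂ν, g (T 1 x) ≠ ∞ := htransfer hgfin
  -- the entropy production equals the coboundary of log g, ν-a.e.
  have hcob : ∀ᵐ x ∂ν,
      entProd ω T x = Real.log ((g (T 1 x)).toReal) - Real.log ((g x).toReal) := by
    filter_upwards [hkey, hgpos, hgfin, hgTpos, hgTfin] with x hk h0 hfin hT0' hTfin
    have hΔ : (ω.map (T 1)).rnDeriv ω (T 1 x) = g (T 1 x) / g x := by
      exact (ENNReal.eq_div_iff h0.ne' hfin).mpr hk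
    have hgx0 : (g x).toReal ≠ 0 := (ENNReal.toReal_pos h0.ne' hfin).ne'
    have hgTx0 : (g (T 1 x)).toReal ≠ 0 := (ENNReal.toReal_pos hT0'.ne' hTfin).ne'
    rw [entProd, hΔ, ENNReal.toReal_div, Real.log_div hgTx0 hgx0]
  -- apply the coboundary lemma
  exact integral_coboundary_zero ν (T 1) (hTmeas 1) hinv
    (fun x => Real.log ((g x).toReal))
    (Real.measurable_log.comp (ENNReal.measurable_toReal.comp hgmeas))
    _ hint hcob
end

section
/- Suppose there exists a φ-invariant probability measure ν on (M, 𝓕) with ν ≪ ω and σ ∈ L¹(M, dν). If there exist a strictly increasing sequence (t_n) of positive integers and a real number s⁺ such that lim_{n→∞} (1/t_n) Σ_{s=0}^{t_n−1} σ(φ^s(x)) = s⁺ for ω-a.e. x ∈ M, then s⁺ = 0. -/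
open MeasureTheory Filter

/-- If there exists a `φ`-invariant probability measure `ν ≪ ω` with `σ ∈ L¹(ν)`, and the
ergodic averages `(1/t_n) Σ_{s<t_n} σ∘φ^s` converge ω-a.e. to a constant `s⁺` along a
strictly increasing sequence of positive integers, then `s⁺ = 0`. -/
theorem mean_entropy_production_vanishes
    {M : Type*} [MeasurableSpace M] (ω : Measure M) [IsProbabilityMeasure ω]
    (T : ℤ → M → M)
    (hT0 : T 0 = id)
    (hTadd : ∀ n m : ℤ, T (n + m) = T n ∘ T m)
    (hTmeas : ∀ n : ℤ, Measurable (T n))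
    (hequiv : ∀ n : ℤ, ω.map (T n) ≪ ω ∧ ω ≪ ω.map (T n))
    (ν : Measure M) [IsProbabilityMeasure ν]
    (hinv : ν.map (T 1) = ν)
    (hac : ν ≪ ω)
    (hint : Integrable (fun x => entProd ω T x) ν)
    (t : ℕ → ℕ) (htmono : StrictMono t) (htpos : ∀ n, 0 < t n)
    (splus : ℝ)
    (hconv : ∀ᵐ x ∂ω, Tendsto
      (fun n : ℕ => (t n : ℝ)⁻¹ * ∑ s ∈ Finset.range (t n), entProd ω T (T (s : ℤ) x))
      atTop (nhds splus)) :
    splus = 0 := by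
  classical
  set g : M → ENNReal := ν.rnDeriv ω with hg_def
  have hgmeas : Measurable g := Measure.measurable_rnDeriv ν ω
  set L : M → ℝ := fun x => Real.log (g x).toReal with hL_def
  have hLmeas : Measurable L := Real.measurable_log.comp hgmeas.ennreal_toReal
  haveI : IsProbabilityMeasure (ω.map (T 1)) :=
    Measure.isProbabilityMeasure_map (hTmeas 1).aemeasurable
  -- invariance for all nonnegative powers
  have hmapn : ∀ m : ℕ, ν.map (T (m : ℤ)) = ν := by
    intro m
    induction m with
    | zero => simp [hT0]
    | succ k ih =>
        have hcast : (((k + 1 : ℕ) : ℤ)) = (k : ℤ) + 1 := by push_cast; ring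
        calc ν.map (T ((k + 1 : ℕ) : ℤ)) = ν.map (T ((k : ℤ) + 1)) := by rw [hcast]
          _ = ν.map (T (k : ℤ) ∘ T 1) := by rw [hTadd]
          _ = (ν.map (T 1)).map (T (k : ℤ)) := (Measure.map_map (hTmeas _) (hTmeas 1)).symm
          _ = ν.map (T (k : ℤ)) := by rw [hinv]
          _ = ν := ih
  have hν_ae : ∀ (m : ℕ) (P : M → Prop), (∀ᵐ x ∂ν, P x) → ∀ᵐ x ∂ν, P (T (m : ℤ) x) := by
    intro m P hP
    have h1 : ∀ᵐ x ∂(ν.map (T (m : ℤ))), P x := by rw [hmapn m]; exact hP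
    exact ae_of_ae_map (hTmeas _).aemeasurable h1
  have hid : ∀ x, T (-1) (T 1 x) = x := by
    intro x
    have h := congrFun (hTadd (-1) 1) x
    norm_num [hT0] at h
    exact h.symm
  have hwd : ω.withDensity g = ν := Measure.withDensity_rnDeriv_eq ν ω hac
  -- ν as a density w.r.t. ω.map (T 1)
  have hνwd : ν = (ω.map (T 1)).withDensity (g ∘ T (-1)) := by
    ext A hA
    rw [withDensity_apply _ hA, setLIntegral_map hA (hgmeas.comp (hTmeas (-1))) (hTmeas 1)]
    simp only [Function.comp_apply, hid]
    rw [← withDensity_apply _ ((hTmeas 1) hA), hwd, ← Measure.map_apply (hTmeas 1) hA, hinv]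
  have hH : ν.rnDeriv (ω.map (T 1)) =ᵐ[ω.map (T 1)] fun y => g (T (-1) y) := by
    have h1 := Measure.rnDeriv_withDensity (ω.map (T 1)) (hgmeas.comp (hTmeas (-1)))
    rw [← hνwd] at h1
    exact h1.trans (Filter.Eventually.of_forall fun y => rfl)
  have hνmap : ν ≪ ω.map (T 1) := hac.trans (hequiv 1).2
  have hchain : (fun x => ν.rnDeriv (ω.map (T 1)) x * (ω.map (T 1)).rnDeriv ω x) =ᵐ[ω] g :=
    Measure.rnDeriv_mul_rnDeriv hνmap
  set Δ : M → ENNReal := (ω.map (T 1)).rnDeriv ω with hΔ_def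
  have key_ω : ∀ᵐ x ∂ω, g (T (-1) x) * Δ x = g x := by
    have hH' : ν.rnDeriv (ω.map (T 1)) =ᵐ[ω] fun y => g (T (-1) y) :=
      hH.filter_mono ((hequiv 1).2.ae_le)
    filter_upwards [hchain, hH'] with x h1 h2
    rw [← h2, h1]
  -- pull back through T 1
  have key_ω1 : ∀ᵐ x ∂ω, g x * Δ (T 1 x) = g (T 1 x) := by
    have h1 : ∀ᵐ x ∂(ω.map (T 1)), g (T (-1) x) * Δ x = g x := (hequiv 1).1.ae_le key_ω
    have h2 := ae_of_ae_map (hTmeas 1).aemeasurable h1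
    filter_upwards [h2] with x hx
    rwa [hid x] at hx
  have key_ν : ∀ᵐ x ∂ν, g x * Δ (T 1 x) = g (T 1 x) := hac.ae_le key_ω1
  have hgpos : ∀ᵐ x ∂ν, 0 < g x := Measure.rnDeriv_pos hac
  have hglt : ∀ᵐ x ∂ν, g x < ⊤ := hac.ae_le (Measure.rnDeriv_lt_top ν ω)
  have hg1pos : ∀ᵐ x ∂ν, 0 < g (T 1 x) := by
    have := hν_ae 1 (fun x => 0 < g x) hgpos
    simpa using this
  have hg1lt : ∀ᵐ x ∂ν, g (T 1 x) < ⊤ := by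
    have := hν_ae 1 (fun x => g x < ⊤) hglt
    simpa using this
  -- the basic cocycle identity
  have hQ : ∀ᵐ x ∂ν, entProd ω T x = L (T 1 x) - L x := by
    filter_upwards [key_ν, hgpos, hglt, hg1pos, hg1lt] with x h hp hl hp1 hl1
    have hΔeq : Δ (T 1 x) = g (T 1 x) / g x := (ENNReal.eq_div_iff hp.ne' hl.ne).2 h
    show Real.log ((Δ (T 1 x)).toReal) = _
    rw [hΔeq, ENNReal.toReal_div]
    exact Real.log_div (ENNReal.toReal_pos hp1.ne' hl1.ne).ne'
      (ENNReal.toReal_pos hp.ne' hl.ne).ne'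
  -- cocycle identity along the orbit
  have hQs : ∀ s : ℕ, ∀ᵐ x ∂ν,
      entProd ω T (T (s : ℤ) x) = L (T (((s + 1 : ℕ) : ℤ)) x) - L (T (s : ℤ) x) := by
    intro s
    have h1 := hν_ae s (fun x => entProd ω T x = L (T 1 x) - L x) hQ
    filter_upwards [h1] with x hx
    rw [hx]
    congr 2
    have h2 := congrFun (hTadd 1 (s : ℤ)) x
    have hcast : (((s + 1 : ℕ) : ℤ)) = 1 + (s : ℤ) := by push_cast; ring
    rw [hcast, h2]
    rfl
  have hQall : ∀ᵐ x ∂ν, ∀ s : ℕ,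
      entProd ω T (T (s : ℤ) x) = L (T (((s + 1 : ℕ) : ℤ)) x) - L (T (s : ℤ) x) :=
    ae_all_iff.2 hQs
  -- telescoping sum
  have hsum : ∀ᵐ x ∂ν, ∀ m : ℕ,
      ∑ s ∈ Finset.range m, entProd ω T (T (s : ℤ) x) = L (T (m : ℤ) x) - L x := by
    filter_upwards [hQall] with x hx
    intro m
    have h1 : ∑ s ∈ Finset.range m, entProd ω T (T (s : ℤ) x)
        = ∑ s ∈ Finset.range m, ((fun k : ℕ => L (T (k : ℤ) x)) (s + 1)
            - (fun k : ℕ => L (T (k : ℤ) x)) s) :=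
      Finset.sum_congr rfl fun s _ => hx s
    rw [h1, Finset.sum_range_sub (fun k : ℕ => L (T (k : ℤ) x))]
    simp [hT0]
  -- convergence statement w.r.t. ν
  have httop : Tendsto (fun n => (t n : ℝ)) atTop atTop := by
    apply tendsto_natCast_atTop_atTop.comp
    exact htmono.tendsto_atTop
  have hinv0 : Tendsto (fun n => (t n : ℝ)⁻¹) atTop (nhds 0) :=
    tendsto_inv_atTop_zero.comp httop
  have hb : ∀ᵐ x ∂ν,
      Tendsto (fun n => (t n : ℝ)⁻¹ * L (T ((t n : ℕ) : ℤ) x)) atTop (nhds splus) := by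
    filter_upwards [hac.ae_le hconv, hsum] with x hx hs
    have h1 : Tendsto (fun n => (t n : ℝ)⁻¹ * (L (T ((t n : ℕ) : ℤ) x) - L x))
        atTop (nhds splus) := hx.congr fun n => by rw [hs (t n)]
    have h2 := h1.add (hinv0.mul_const (L x))
    rw [zero_mul, add_zero] at h2
    exact h2.congr fun n => by ring
  -- suppose splus ≠ 0 and derive a contradiction
  by_contra hs0
  have habs : ∀ᵐ x ∂ν, Tendsto (fun n => |L (T ((t n : ℕ) : ℤ) x)|) atTop atTop := by
    filter_upwards [hb] with x hx
    have h1 : Tendsto (fun n => |(t n : ℝ)⁻¹ * L (T ((t n : ℕ) : ℤ) x)|)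
        atTop (nhds |splus|) := hx.abs
    have h2 : Tendsto (fun n => (t n : ℝ) * |(t n : ℝ)⁻¹ * L (T ((t n : ℕ) : ℤ) x)|)
        atTop atTop := httop.atTop_mul_pos (abs_pos.2 hs0) h1
    refine h2.congr fun n => ?_
    have htn : (0 : ℝ) < (t n : ℝ) := by exact_mod_cast htpos n
    rw [abs_mul, abs_inv, abs_of_pos htn]
    field_simp
  -- every level set of |L| has full measure
  have hA1 : ∀ c : ℝ, ν {x | c < |L x|} = 1 := by
    intro c
    set A : Set M := {x | c < |L x|} with hA_def
    have hAm : MeasurableSet A := measurableSet_lt measurable_const hLmeas.abs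
    have hBn : ∀ n : ℕ, ν ((T ((t n : ℕ) : ℤ)) ⁻¹' A) = ν A := by
      intro n
      rw [← Measure.map_apply (hTmeas _) hAm, hmapn (t n)]
    set S : ℕ → Set M := fun N => ⋂ (n : ℕ) (_ : N ≤ n), (T ((t n : ℕ) : ℤ)) ⁻¹' A with hS_def
    have hmem : ∀ᵐ x ∂ν, x ∈ ⋃ N, S N := by
      filter_upwards [habs] with x hx
      have h1 : ∀ᶠ n in atTop, c < |L (T ((t n : ℕ) : ℤ) x)| := hx.eventually_gt_atTop c
      obtain ⟨N, hN⟩ := eventually_atTop.1 h1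
      exact Set.mem_iUnion.2 ⟨N, Set.mem_iInter₂.2 fun n hn => hN n hn⟩
    have hSm : ∀ N, MeasurableSet (S N) := fun N =>
      MeasurableSet.iInter fun n => MeasurableSet.iInter fun _ => (hTmeas _) hAm
    have hmono : Monotone S := by
      intro N N' h
      exact Set.iInter₂_mono' fun n hn => ⟨n, h.trans hn, subset_rfl⟩
    have hU : MeasurableSet (⋃ N, S N) := MeasurableSet.iUnion hSm
    have h1 : ν (⋃ N, S N) = 1 := by
      have hc : ν ((⋃ N, S N)ᶜ) = 0 := by
        exact ae_iff.1 hmem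
      have h2 := measure_add_measure_compl (μ := ν) hU
      rw [hc, add_zero, measure_univ] at h2
      exact h2
    have h2 : ν (⋃ N, S N) ≤ ν A := by
      rw [hmono.directed_le.measure_iUnion]
      refine iSup_le fun N => le_trans (measure_mono ?_) (le_of_eq (hBn N))
      exact fun x hx => Set.mem_iInter₂.1 hx N le_rfl
    exact le_antisymm prob_le_one (h1 ▸ h2)
  -- contradiction: |L x| would be infinite
  have hall : ∀ᵐ x ∂ν, ∀ k : ℕ, (k : ℝ) < |L x| := by
    refine ae_all_iff.2 fun k => ?_
    have hAm : MeasurableSet {x | (k : ℝ) < |L x|} :=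
      measurableSet_lt measurable_const hLmeas.abs
    rw [ae_iff]
    have h2 := measure_add_measure_compl (μ := ν) hAm
    rw [hA1 (k : ℝ), measure_univ] at h2
    have h3 : ν ({x | (k : ℝ) < |L x|}ᶜ) = 0 := by
      have h4 : (1 : ENNReal) + ν ({x | (k : ℝ) < |L x|}ᶜ) = 1 + 0 := by
        rw [add_zero]; exact h2
      exact (ENNReal.add_right_inj (by norm_num)).1 h4
    simpa [Set.compl_setOf] using h3
  haveI : (ae ν).NeBot := ae_neBot.2 (IsProbabilityMeasure.ne_zero ν)
  obtain ⟨x, hx⟩ := hall.exists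
  obtain ⟨k, hk⟩ := exists_nat_gt |L x|
  exact absurd (hx k) (not_lt.2 hk.le)
end
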